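/- arXiv:2104.00045 — 3 statements merged into one kernel-verified Lean document; each statement's English description precedes it below -/
import Mathlib

section
/- Define a function Realizable : ℕ → ℕ → Prop and assume: (AR) for all m, k ≥ 3, Realizable m (k−1) implies Realizable ((k+1)·m) k together with the existence of a pencil of m parallel lines enabling (AS): for all r with 1 ≤ r ≤ m, Realizable ((k−1)·(k+1)·m + r) k. Assume also that for some a, Realizable n (k−1) holds for all n ≥ a. Then Realizable n k holds for all n ≥ (k²−1)·max(a, k²−2). -/
theorem stmt_9 (Realizable : ℕ → ℕ → Prop) (k a : ℕ) (hk : 3 ≤ k)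
    (hAR : ∀ m : ℕ, Realizable m (k - 1) →
      Realizable ((k + 1) * m) k ∧
        ∀ r : ℕ, 1 ≤ r → r ≤ m → Realizable ((k - 1) * ((k + 1) * m) + r) k)
    (ha : ∀ n : ℕ, a ≤ n → Realizable n (k - 1)) :
    ∀ n : ℕ, (k ^ 2 - 1) * max a (k ^ 2 - 2) ≤ n → Realizable n k := by
  intro n hn
  have hK : 0 < k ^ 2 - 1 := by have h9 : 3 ^ 2 ≤ k ^ 2 := Nat.pow_le_pow_left hk 2; omega
  have hfact : k ^ 2 - 1 = (k + 1) * (k - 1) := by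
    have := Nat.sq_sub_sq k 1
    simpa using this
  set m := n / (k ^ 2 - 1) with hm
  set r := n % (k ^ 2 - 1) with hr
  have hdm : (k ^ 2 - 1) * m + r = n := Nat.div_add_mod n (k ^ 2 - 1)
  have hrlt : r < k ^ 2 - 1 := Nat.mod_lt _ hK
  have hmM : max a (k ^ 2 - 2) ≤ m := by
    rw [hm, Nat.le_div_iff_mul_le hK, mul_comm]
    exact hn
  have ham : a ≤ m := le_trans (le_max_left _ _) hmM
  have hk2m : k ^ 2 - 2 ≤ m := le_trans (le_max_right _ _) hmM
  rcases Nat.eq_zero_or_pos r with hr0 | hr1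
  · -- n = (k^2-1)*m = (k+1)*((k-1)*m)
    have hmem : Realizable ((k - 1) * m) (k - 1) := by
      apply ha
      calc a ≤ m := ham
        _ ≤ (k - 1) * m := Nat.le_mul_of_pos_left m (by omega)
    have := (hAR _ hmem).1
    have heq : (k + 1) * ((k - 1) * m) = n := by
      rw [← mul_assoc, ← hfact]
      omega
    rwa [heq] at this
  · have hmem : Realizable m (k - 1) := ha m ham
    have hrm : r ≤ m := by omega
    have := (hAR m hmem).2 r hr1 hrm
    have heq : (k - 1) * ((k + 1) * m) + r = n := by
      rw [← mul_assoc, mul_comm (k - 1) (k + 1), ← hfact]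
      omega
    rwa [heq] at this
end

section
/- Let A be a line in the real affine plane and let α be an affine transformation of ℝ² fixing A pointwise (an axial affinity with axis A). If P is a point not on A with α(P) = P', and Q is another point not on A such that the line PQ meets A in a point F, then α(Q) lies on the line FP'; moreover the line through Q and α(Q) is parallel to the line through P and P'. -/
theorem stmt_15 (A : AffineSubspace ℝ (ℝ × ℝ))
    (hA : ∃ p v : ℝ × ℝ, v ≠ 0 ∧ A = affineSpan ℝ {p, p + v})
    (α : (ℝ × ℝ) ≃ᵃ[ℝ] (ℝ × ℝ))
    (hfix : ∀ x : ℝ × ℝ, x ∈ A → α x = x)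
    (hne : α ≠ AffineEquiv.refl ℝ (ℝ × ℝ))
    (P Q F P' : ℝ × ℝ)
    (hP : P ∉ A) (hQ : Q ∉ A) (hPQ : P ≠ Q)
    (hP' : P' = α P)
    (hF : F ∈ A) (hFline : F ∈ affineSpan ℝ ({P, Q} : Set (ℝ × ℝ))) :
    α Q ∈ affineSpan ℝ ({F, P'} : Set (ℝ × ℝ)) ∧
      AffineSubspace.Parallel (affineSpan ℝ ({Q, α Q} : Set (ℝ × ℝ)))
        (affineSpan ℝ ({P, P'} : Set (ℝ × ℝ))) := by
  -- Write F on the line through P and Q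
  obtain ⟨t, ht⟩ : ∃ r : ℝ, r • (Q - P) = F - P := by
    have h := (vadd_left_mem_affineSpan_pair (k := ℝ) (p₁ := P) (p₂ := Q)
      (v := F - P)).mp
    simp only [vsub_eq_sub, vadd_eq_add, sub_add_cancel] at h
    exact h hFline
  have ht0 : t ≠ 0 := by
    rintro rfl
    apply hP
    have : F = P := by
      have : (0:ℝ) • (Q - P) = 0 := zero_smul _ _
      have hFP : F - P = 0 := by rw [← ht, this]
      have := sub_eq_zero.mp hFP
      exact this
    rwa [this] at hF
  have ht1 : t ≠ 1 := by
    rintro rfl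
    apply hQ
    have : F = Q := by
      have hFP : F - P = Q - P := by rw [← ht, one_smul]
      have := sub_left_injective hFP
      exact this
    rwa [this] at hF
  have hFlm : AffineMap.lineMap P Q t = F := by
    simp only [AffineMap.lineMap_apply, vsub_eq_sub, vadd_eq_add]
    rw [ht]; abel
  -- apply α
  have hkey : AffineMap.lineMap P' (α Q) t = F := by
    have hmap : α (AffineMap.lineMap P Q t) = AffineMap.lineMap (α P) (α Q) t := by
      simpa using (α : (ℝ × ℝ) →ᵃ[ℝ] (ℝ × ℝ)).apply_lineMap P Q t
    rw [hP', ← hmap, hFlm, hfix F hF]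
  have hαQ : α Q = t⁻¹ • (F - P') + P' := by
    have h1 : t • (α Q - P') + P' = F := by
      simpa [AffineMap.lineMap_apply, vsub_eq_sub, vadd_eq_add] using hkey
    have h2 : t • (α Q - P') = F - P' := by
      rw [← h1]; abel
    have h3 : α Q - P' = t⁻¹ • (F - P') := by
      rw [← h2, smul_smul, inv_mul_cancel₀ ht0, one_smul]
    rw [← h3]; abel
  have hQeq : Q = t⁻¹ • (F - P) + P := by
    have h3 : Q - P = t⁻¹ • (F - P) := by
      rw [← ht, smul_smul, inv_mul_cancel₀ ht0, one_smul]
    rw [← h3]; abel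
  constructor
  · rw [hαQ]
    have := smul_vsub_rev_vadd_mem_affineSpan_pair (k := ℝ) t⁻¹ F P'
    simpa [vsub_eq_sub, vadd_eq_add] using this
  · rw [AffineSubspace.affineSpan_pair_parallel_iff_vectorSpan_eq,
      vectorSpan_pair, vectorSpan_pair]
    have hdiff : Q - α Q = (1 - t⁻¹) • (P - P') := by
      rw [hαQ, hQeq]
      module
    have hunit : IsUnit (1 - t⁻¹) := by
      apply isUnit_iff_ne_zero.mpr
      intro h
      apply ht1
      have : t⁻¹ = 1 := by linarith [sub_eq_zero.mp h]
      field_simp at this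
      exact this.symm
    simp only [vsub_eq_sub]
    rw [hdiff]
    exact Submodule.span_singleton_smul_eq hunit _
end

section
/- For every integer k ≥ 2 there exists an integer N such that for all n ≥ N there is a geometric (n_k) configuration, assuming: (i) for all n ≥ 3 there is an (n_2) configuration; (ii) affine replication: from any (m_{k−1}) configuration one obtains a ((k+1)m_k) configuration with a pencil of m parallel lines; (iii) affine switch: from any (m_k) configuration with a pencil of q parallel lines and any 1 ≤ r ≤ q one obtains a (((k−1)m + r)_k) configuration. -/
lemma cover_lemma (c M : ℕ) (hc : c ≤ M) (h1 : 1 ≤ M) :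
    ∀ n, c * M < n → ∃ m, M ≤ m ∧ c * m < n ∧ n ≤ (c + 1) * m := by
  intro n hn
  induction n with
  | zero => omega
  | succ n ih =>
    by_cases h : c * M < n
    · obtain ⟨m, hm1, hm2, hm3⟩ := ih h
      by_cases h' : n + 1 ≤ (c + 1) * m
      · exact ⟨m, hm1, by omega, h'⟩
      · refine ⟨m + 1, by omega, ?_, ?_⟩
        · have e1 : c * (m + 1) = c * m + c := by ring
          have e2 : (c + 1) * m = c * m + m := by ring
          have hcm : c ≤ m := le_trans hc hm1
          linarith
        · have e2 : (c + 1) * m = c * m + m := by ring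
          have e3 : (c + 1) * (m + 1) = c * m + c + m + 1 := by ring
          linarith
    · have hn1 : n + 1 = c * M + 1 := by omega
      have e2 : (c + 1) * M = c * M + M := by ring
      exact ⟨M, le_refl _, by omega, by linarith⟩

theorem stmt_18 (R : ℕ → ℕ → ℕ → Prop)
    (h2 : ∀ n : ℕ, 3 ≤ n → ∃ q : ℕ, R n 2 q)
    (hAR : ∀ m k q : ℕ, 3 ≤ k → R m (k - 1) q → R ((k + 1) * m) k m)
    (hAS : ∀ m k q r : ℕ, R m k q → 1 ≤ r → r ≤ q →
      ∃ q' : ℕ, R ((k - 1) * m + r) k q') :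
    ∀ k : ℕ, 2 ≤ k → ∃ N : ℕ, ∀ n : ℕ, N ≤ n → ∃ q : ℕ, R n k q := by
  intro k hk
  induction k, hk using Nat.le_induction with
  | base => exact ⟨3, fun n hn => h2 n hn⟩
  | succ k hk ih =>
    obtain ⟨M, hM⟩ := ih
    set c : ℕ := k * (k + 2) with hc
    have hc2 : 2 ≤ c := le_trans hk (Nat.le_mul_of_pos_right k (by omega))
    refine ⟨c * (max M c) + 1, fun n hn => ?_⟩
    obtain ⟨m, hm1, hm2, hm3⟩ := cover_lemma c (max M c) (le_max_right _ _)
      (by omega) n (by omega)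
    -- get an (m_k) configuration
    obtain ⟨q, hq⟩ := hM m (le_trans (le_max_left _ _) hm1)
    -- affine replication to level k+1
    have hrep : R ((k + 1 + 1) * m) (k + 1) m := by
      have := hAR m (k + 1) q (by omega) (by simpa using hq)
      simpa using this
    -- affine switch with r = n - c * m
    have hr1 : 1 ≤ n - c * m := by omega
    have hr2 : n - c * m ≤ m := by
      have e : (c + 1) * m = c * m + m := by ring
      omega
    obtain ⟨q', hq'⟩ := hAS ((k + 1 + 1) * m) (k + 1) m (n - c * m) hrep hr1 hr2
    have heq : (k + 1 - 1) * ((k + 1 + 1) * m) + (n - c * m) = n := by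
      have e : (k + 1 - 1) * ((k + 1 + 1) * m) = c * m := by
        simp [hc]; ring
      rw [e]; omega
    rw [heq] at hq'
    exact ⟨q', hq'⟩
end
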